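/- Let 𝒳 be a separable metric space, let 0 < β ≤ 1, and let p > 0. Then E[|ĥ_X|^p] < ∞ if and only if E[(‖X₁‖^β + ‖X₂‖^β − d(X₁,X₂)^β)^p] < ∞ (note that ‖X₁‖^β + ‖X₂‖^β − d(X₁,X₂)^β ≥ 0 since β ≤ 1). -/

import Mathlib

open MeasureTheory ProbabilityTheory

noncomputable section

/-- `ĥ_X := d(X₁,X₂)^β − d(X₂,X₃)^β + d(X₃,X₄)^β − d(X₄,X₁)^β`, built from four
(independent) copies `X 0, X 1, X 2, X 3` of a random variable. -/
def hHat (β : ℝ) {Ω 𝒳 : Type*} [MetricSpace 𝒳] (X : Fin 4 → Ω → 𝒳) (ω : Ω) : ℝ :=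
  dist (X 0 ω) (X 1 ω) ^ β - dist (X 1 ω) (X 2 ω) ^ β
    + dist (X 2 ω) (X 3 ω) ^ β - dist (X 3 ω) (X 0 ω) ^ β

/-- `(a+b)^p ≤ a^p + b^p` for `0 ≤ p ≤ 1`, real version. -/
lemma aux_rpow_subadd {a b p : ℝ} (ha : 0 ≤ a) (hb : 0 ≤ b) (hp : 0 ≤ p) (hp1 : p ≤ 1) :
    (a + b) ^ p ≤ a ^ p + b ^ p := by
  lift a to NNReal using ha
  lift b to NNReal using hb
  rw [← NNReal.coe_add, ← NNReal.coe_rpow, ← NNReal.coe_rpow, ← NNReal.coe_rpow,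
    ← NNReal.coe_add, NNReal.coe_le_coe]
  exact NNReal.rpow_add_le_add_rpow a b hp hp1

/-- The snowflake triangle inequality: `d(x,z)^β ≤ d(x,y)^β + d(y,z)^β` for `0 < β ≤ 1`. -/
lemma aux_tri {𝒳 : Type*} [MetricSpace 𝒳] {β : ℝ} (hβ0 : 0 < β) (hβ1 : β ≤ 1)
    (x y z : 𝒳) : dist x z ^ β ≤ dist x y ^ β + dist y z ^ β := by
  calc dist x z ^ β ≤ (dist x y + dist y z) ^ β :=
        Real.rpow_le_rpow dist_nonneg (dist_triangle x y z) hβ0.le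
    _ ≤ dist x y ^ β + dist y z ^ β :=
        aux_rpow_subadd dist_nonneg dist_nonneg hβ0.le hβ1

lemma aux_tri_abs {𝒳 : Type*} [MetricSpace 𝒳] {β : ℝ} (hβ0 : 0 < β) (hβ1 : β ≤ 1)
    (x y z : 𝒳) : |dist x z ^ β - dist y z ^ β| ≤ dist x y ^ β := by
  rw [abs_sub_le_iff]
  constructor
  · have := aux_tri hβ0 hβ1 x y z; linarith
  · have := aux_tri hβ0 hβ1 y x z
    rw [dist_comm y x] at this; linarith

/-- `(a+b)^p ≤ 2^p (a^p + b^p)` for any `p ≥ 0`, `a, b ≥ 0`. -/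
lemma aux_pow_add {a b p : ℝ} (ha : 0 ≤ a) (hb : 0 ≤ b) (hp : 0 ≤ p) :
    (a + b) ^ p ≤ 2 ^ p * (a ^ p + b ^ p) := by
  have hmax : a + b ≤ 2 * max a b := by
    rcases le_total a b with h | h
    · simp [max_eq_right h]; linarith
    · simp [max_eq_left h]; linarith
  have h1 : (a + b) ^ p ≤ (2 * max a b) ^ p :=
    Real.rpow_le_rpow (by linarith) hmax hp
  have h2 : (2 * max a b) ^ p = 2 ^ p * (max a b) ^ p :=
    Real.mul_rpow (by norm_num) (le_max_of_le_left ha)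
  have h3 : (max a b) ^ p ≤ a ^ p + b ^ p := by
    rcases le_total a b with h | h
    · rw [max_eq_right h]
      have := Real.rpow_nonneg ha p; linarith
    · rw [max_eq_left h]
      have := Real.rpow_nonneg hb p; linarith
  calc (a + b) ^ p ≤ 2 ^ p * (max a b) ^ p := by rw [← h2]; exact h1
    _ ≤ 2 ^ p * (a ^ p + b ^ p) := by
        have : (0:ℝ) ≤ 2 ^ p := Real.rpow_nonneg (by norm_num) p
        nlinarith


/-- Continuity of `fun x => dist (f x) (g x) ^ β`. -/
lemma aux_cont_dist_rpow {α 𝒳 : Type*} [TopologicalSpace α] [MetricSpace 𝒳]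
    {f g : α → 𝒳} (hf : Continuous f) (hg : Continuous g) {β : ℝ} (hβ : 0 ≤ β) :
    Continuous fun x => dist (f x) (g x) ^ β :=
  (Real.continuous_rpow_const hβ).comp (hf.dist hg)

/-- Continuity of the 4-point kernel. -/
lemma aux_contH {𝒳 : Type*} [MetricSpace 𝒳] {β p : ℝ} (hβ : 0 ≤ β) (hp : 0 ≤ p) :
    Continuous fun q : (𝒳 × 𝒳) × (𝒳 × 𝒳) =>
      |dist q.2.1 q.2.2 ^ β - dist q.2.2 q.1.1 ^ β
        + dist q.1.1 q.1.2 ^ β - dist q.1.2 q.2.1 ^ β| ^ p := by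
  apply (Real.continuous_rpow_const hp).comp
  apply Continuous.abs
  exact (((aux_cont_dist_rpow (continuous_fst.comp continuous_snd)
      (continuous_snd.comp continuous_snd) hβ).sub
    (aux_cont_dist_rpow (continuous_snd.comp continuous_snd)
      (continuous_fst.comp continuous_fst) hβ)).add
    (aux_cont_dist_rpow (continuous_fst.comp continuous_fst)
      (continuous_snd.comp continuous_fst) hβ)).sub
    (aux_cont_dist_rpow (continuous_snd.comp continuous_fst)
      (continuous_fst.comp continuous_snd) hβ)

/-- Let `𝒳` be a separable metric space, `0 < β ≤ 1`, `p > 0`. Then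
`E[|ĥ_X|^p] < ∞` if and only if `E[(‖X₁‖^β + ‖X₂‖^β − d(X₁,X₂)^β)^p] < ∞`
(the latter base being nonnegative since `β ≤ 1`). -/
theorem stmt16 {Ω : Type*} [MeasurableSpace Ω] (μ : Measure Ω) [IsProbabilityMeasure μ]
    {𝒳 : Type*} [MetricSpace 𝒳] [TopologicalSpace.SeparableSpace 𝒳]
    [MeasurableSpace 𝒳] [BorelSpace 𝒳] (o : 𝒳)
    (β : ℝ) (hβ0 : 0 < β) (hβ1 : β ≤ 1) (p : ℝ) (hp : 0 < p)
    (X : Ω → 𝒳) (Xs : Fin 4 → Ω → 𝒳)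
    (hXm : Measurable X) (hXsm : ∀ i, Measurable (Xs i))
    (hindep : iIndepFun Xs μ)
    (hid : ∀ i, IdentDistrib (Xs i) X μ μ) :
    Integrable (fun ω => |hHat β Xs ω| ^ p) μ ↔
      Integrable (fun ω =>
        (dist (Xs 0 ω) o ^ β + dist (Xs 1 ω) o ^ β - dist (Xs 0 ω) (Xs 1 ω) ^ β) ^ p) μ := by
  haveI : SecondCountableTopology 𝒳 := UniformSpace.secondCountable_of_separable 𝒳
  set ν : Measure 𝒳 := μ.map X with hν
  haveI : IsProbabilityMeasure ν := Measure.isProbabilityMeasure_map hXm.aemeasurable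
  -- the nonnegative "defect" function
  set g : 𝒳 → 𝒳 → ℝ := fun x y => dist x o ^ β + dist y o ^ β - dist x y ^ β with hg
  have hg0 : ∀ x y, 0 ≤ g x y := by
    intro x y
    have := aux_tri hβ0 hβ1 x o y
    rw [dist_comm o y] at this
    simp only [hg]; linarith
  -- continuity / measurability facts
  have hGc : Continuous fun q : 𝒳 × 𝒳 => g q.1 q.2 ^ p := by
    apply (Real.continuous_rpow_const hp.le).comp
    exact ((aux_cont_dist_rpow continuous_fst continuous_const hβ0.le).add
      (aux_cont_dist_rpow continuous_snd continuous_const hβ0.le)).sub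
      (aux_cont_dist_rpow continuous_fst continuous_snd hβ0.le)
  -- law of a pair of distinct coordinates
  have hmapPair : ∀ i j : Fin 4, i ≠ j →
      μ.map (fun ω => (Xs i ω, Xs j ω)) = ν.prod ν := by
    intro i j hij
    have h := hindep.indepFun hij
    rw [indepFun_iff_map_prod_eq_prod_map_map (hXsm i).aemeasurable (hXsm j).aemeasurable] at h
    rw [h, (hid i).map_eq, (hid j).map_eq]
  -- transferring integrability of a function of a pair
  have hpairInt : ∀ (i j : Fin 4), i ≠ j → ∀ (F : 𝒳 × 𝒳 → ℝ), Continuous F →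
      (Integrable F (ν.prod ν) ↔ Integrable (fun ω => F (Xs i ω, Xs j ω)) μ) := by
    intro i j hij F hF
    rw [← hmapPair i j hij,
      integrable_map_measure hF.aestronglyMeasurable
        ((hXsm i).prodMk (hXsm j)).aemeasurable]
    rfl
  -- RHS is integrability of G under ν.prod ν
  have hRHS : Integrable (fun q : 𝒳 × 𝒳 => g q.1 q.2 ^ p) (ν.prod ν) ↔
      Integrable (fun ω =>
        (dist (Xs 0 ω) o ^ β + dist (Xs 1 ω) o ^ β - dist (Xs 0 ω) (Xs 1 ω) ^ β) ^ p) μ :=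
    hpairInt 0 1 (by decide) _ hGc
  rw [← hRHS]
  constructor
  · -- forward direction
    intro hInt
    -- law of the quadruple ((X2,X3),(X0,X1))
    have hquad : μ.map (fun ω => ((Xs 2 ω, Xs 3 ω), (Xs 0 ω, Xs 1 ω)))
        = (ν.prod ν).prod (ν.prod ν) := by
      have h := hindep.indepFun_prodMk_prodMk hXsm 2 3 0 1
        (by decide) (by decide) (by decide) (by decide)
      rw [indepFun_iff_map_prod_eq_prod_map_map
        (((hXsm 2).prodMk (hXsm 3)).aemeasurable)
        (((hXsm 0).prodMk (hXsm 1)).aemeasurable)] at h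
      rw [h, hmapPair 2 3 (by decide), hmapPair 0 1 (by decide)]
    set H : (𝒳 × 𝒳) × (𝒳 × 𝒳) → ℝ := fun q =>
      |dist q.2.1 q.2.2 ^ β - dist q.2.2 q.1.1 ^ β
        + dist q.1.1 q.1.2 ^ β - dist q.1.2 q.2.1 ^ β| ^ p with hH
    have hHc : Continuous H := aux_contH hβ0.le hp.le
    have hHint : Integrable H ((ν.prod ν).prod (ν.prod ν)) := by
      rw [← hquad, integrable_map_measure hHc.aestronglyMeasurable
        ((((hXsm 2).prodMk (hXsm 3)).prodMk ((hXsm 0).prodMk (hXsm 1))).aemeasurable)]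
      have : (H ∘ fun ω => ((Xs 2 ω, Xs 3 ω), (Xs 0 ω, Xs 1 ω)))
          = fun ω => |hHat β Xs ω| ^ p := by
        funext ω; simp [hH, Function.comp, hHat]
      rw [this]
      exact hInt
    -- Fubini: a.e. slice is integrable; pick one
    have hae := hHint.prod_right_ae
    obtain ⟨c, hc⟩ := hae.exists
    obtain ⟨c2, c3⟩ := c
    -- constant
    set C : ℝ := dist c2 o ^ β + dist c3 o ^ β + dist c2 c3 ^ β with hC
    have hC0 : 0 ≤ C := by
      have h1 := Real.rpow_nonneg (dist_nonneg (x := c2) (y := o)) β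
      have h2 := Real.rpow_nonneg (dist_nonneg (x := c3) (y := o)) β
      have h3 := Real.rpow_nonneg (dist_nonneg (x := c2) (y := c3)) β
      simp only [hC]; linarith
    -- pointwise bound : g(x0,x1)^p ≤ 2^p * H((c2,c3),(x0,x1)) + 2^p * C^p
    have hbound : ∀ q : 𝒳 × 𝒳,
        g q.1 q.2 ^ p ≤ 2 ^ p * H ((c2, c3), q) + 2 ^ p * C ^ p := by
      rintro ⟨x0, x1⟩
      set s : ℝ := dist x0 x1 ^ β - dist x1 c2 ^ β + dist c2 c3 ^ β - dist c3 x0 ^ β with hs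
      have h1 : |dist x1 o ^ β - dist x1 c2 ^ β| ≤ dist o c2 ^ β := by
        have := aux_tri_abs hβ0 hβ1 o c2 x1
        rw [dist_comm o x1, dist_comm c2 x1] at this
        exact this
      have h2 : |dist x0 o ^ β - dist c3 x0 ^ β| ≤ dist o c3 ^ β := by
        have := aux_tri_abs hβ0 hβ1 o c3 x0
        rw [dist_comm o x0] at this
        exact this
      have hgs : g x0 x1 ≤ |s| + C := by
        have e1 : g x0 x1 + s = (dist x1 o ^ β - dist x1 c2 ^ β)
            + (dist x0 o ^ β - dist c3 x0 ^ β) + dist c2 c3 ^ β := by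
          simp only [hg, hs]; ring
        have hb1 := abs_le.mp h1
        have hb2 := abs_le.mp h2
        have hs1 := neg_abs_le s
        rw [dist_comm o c2] at hb1
        rw [dist_comm o c3] at hb2
        have : g x0 x1 = (g x0 x1 + s) - s := by ring
        rw [this, e1]
        simp only [hC]
        have := abs_le.mp (le_refl |s|)
        nlinarith [neg_abs_le s, le_abs_self s]
      have hpow : g x0 x1 ^ p ≤ (|s| + C) ^ p :=
        Real.rpow_le_rpow (hg0 x0 x1) hgs hp.le
      have h2p : (|s| + C) ^ p ≤ 2 ^ p * (|s| ^ p + C ^ p) :=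
        aux_pow_add (abs_nonneg s) hC0 hp.le
      have hHval : H ((c2, c3), (x0, x1)) = |s| ^ p := by
        simp only [hH, hs]
      calc g x0 x1 ^ p ≤ 2 ^ p * (|s| ^ p + C ^ p) := le_trans hpow h2p
        _ = 2 ^ p * H ((c2, c3), (x0, x1)) + 2 ^ p * C ^ p := by rw [hHval]; ring
    -- integrable dominating function
    have hdom : Integrable (fun q : 𝒳 × 𝒳 => 2 ^ p * H ((c2, c3), q) + 2 ^ p * C ^ p)
        (ν.prod ν) :=
      (hc.const_mul _).add (integrable_const _)
    apply hdom.mono hGc.aestronglyMeasurable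
    apply ae_of_all
    intro q
    have hb := hbound q
    have hg0' : 0 ≤ g q.1 q.2 ^ p := Real.rpow_nonneg (hg0 q.1 q.2) p
    have hH0 : 0 ≤ H ((c2, c3), q) := Real.rpow_nonneg (abs_nonneg _) p
    have h2p0 : (0:ℝ) ≤ 2 ^ p := Real.rpow_nonneg (by norm_num) p
    have hC0' : 0 ≤ C ^ p := Real.rpow_nonneg hC0 p
    rw [Real.norm_eq_abs, Real.norm_eq_abs, abs_of_nonneg hg0',
      abs_of_nonneg (by positivity)]
    exact hb
  · -- backward direction
    intro hInt
    -- all four pairwise defect functions are integrable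
    have hInt' : ∀ i j : Fin 4, i ≠ j →
        Integrable (fun ω => g (Xs i ω) (Xs j ω) ^ p) μ := by
      intro i j hij
      exact (hpairInt i j hij _ hGc).mp hInt
    have h01 := hInt' 0 1 (by decide)
    have h12 := hInt' 1 2 (by decide)
    have h23 := hInt' 2 3 (by decide)
    have h30 := hInt' 3 0 (by decide)
    -- dominating function
    have hdom : Integrable (fun ω => 4 ^ p * (g (Xs 0 ω) (Xs 1 ω) ^ p
        + g (Xs 1 ω) (Xs 2 ω) ^ p + g (Xs 2 ω) (Xs 3 ω) ^ p
        + g (Xs 3 ω) (Xs 0 ω) ^ p)) μ :=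
      (((h01.add h12).add h23).add h30).const_mul _
    -- measurability of the target
    have hmeas : AEStronglyMeasurable (fun ω => |hHat β Xs ω| ^ p) μ := by
      have heq : (fun ω => |hHat β Xs ω| ^ p)
          = (fun q : (𝒳 × 𝒳) × (𝒳 × 𝒳) =>
              |dist q.2.1 q.2.2 ^ β - dist q.2.2 q.1.1 ^ β
                + dist q.1.1 q.1.2 ^ β - dist q.1.2 q.2.1 ^ β| ^ p)
            ∘ (fun ω => ((Xs 2 ω, Xs 3 ω), (Xs 0 ω, Xs 1 ω))) := by
        funext ω; simp [Function.comp, hHat]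
      rw [heq]
      exact (aux_contH hβ0.le hp.le).comp_aestronglyMeasurable
        ((((hXsm 2).prodMk (hXsm 3)).prodMk ((hXsm 0).prodMk (hXsm 1))).aestronglyMeasurable)
    apply hdom.mono hmeas
    apply ae_of_all
    intro ω
    set a := g (Xs 0 ω) (Xs 1 ω) with ha
    set b := g (Xs 1 ω) (Xs 2 ω) with hb
    set c := g (Xs 2 ω) (Xs 3 ω) with hc
    set d := g (Xs 3 ω) (Xs 0 ω) with hd
    have ha0 := hg0 (Xs 0 ω) (Xs 1 ω)
    have hb0 := hg0 (Xs 1 ω) (Xs 2 ω)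
    have hc0 := hg0 (Xs 2 ω) (Xs 3 ω)
    have hd0 := hg0 (Xs 3 ω) (Xs 0 ω)
    have hident : hHat β Xs ω = -a + b - c + d := by
      simp only [ha, hb, hc, hd, hg, hHat]; ring
    have habs : |hHat β Xs ω| ≤ (a + b) + (c + d) := by
      rw [hident]; rw [abs_le]; constructor <;> nlinarith
    have hstep1 : |hHat β Xs ω| ^ p ≤ ((a + b) + (c + d)) ^ p :=
      Real.rpow_le_rpow (abs_nonneg _) habs hp.le
    have hstep2 : ((a + b) + (c + d)) ^ p ≤ 2 ^ p * ((a + b) ^ p + (c + d) ^ p) :=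
      aux_pow_add (by linarith) (by linarith) hp.le
    have hstep3 : (a + b) ^ p ≤ 2 ^ p * (a ^ p + b ^ p) := aux_pow_add ha0 hb0 hp.le
    have hstep4 : (c + d) ^ p ≤ 2 ^ p * (c ^ p + d ^ p) := aux_pow_add hc0 hd0 hp.le
    have h2p0 : (0:ℝ) ≤ 2 ^ p := Real.rpow_nonneg (by norm_num) p
    have h4p : (4:ℝ) ^ p = 2 ^ p * 2 ^ p := by
      rw [← Real.mul_rpow (by norm_num) (by norm_num)]; norm_num
    have hfinal : |hHat β Xs ω| ^ p ≤ 4 ^ p * (a ^ p + b ^ p + c ^ p + d ^ p) := by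
      calc |hHat β Xs ω| ^ p ≤ 2 ^ p * ((a + b) ^ p + (c + d) ^ p) :=
            le_trans hstep1 hstep2
        _ ≤ 2 ^ p * (2 ^ p * (a ^ p + b ^ p) + 2 ^ p * (c ^ p + d ^ p)) := by nlinarith
        _ = 4 ^ p * (a ^ p + b ^ p + c ^ p + d ^ p) := by rw [h4p]; ring
    have hnn : 0 ≤ |hHat β Xs ω| ^ p := Real.rpow_nonneg (abs_nonneg _) p
    have hap := Real.rpow_nonneg ha0 p
    have hbp := Real.rpow_nonneg hb0 p
    have hcp := Real.rpow_nonneg hc0 p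
    have hdp := Real.rpow_nonneg hd0 p
    simp only [Real.norm_eq_abs]
    exact le_trans (le_of_eq (abs_of_nonneg hnn)) (le_trans hfinal (le_abs_self _))
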